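/- Assume that no nonzero X ∈ 𝔫 satisfies [k, X] = 0 for all k ∈ 𝔨. Let P_𝔫 be a Q-symmetric positive-definite endomorphism of 𝔫 commuting with ad(k)|_𝔫 for every k ∈ 𝔨. Then the extended Ricci endomorphism of the generalized submersion metric P = 0 ⊕ P_𝔫 satisfies Ric(P).T = 0 for every T ∈ 𝔱 and Ric(P).X = Ric_N(P_𝔫).X for every X ∈ 𝔫; that is, Ric(0 ⊕ P_𝔫) = 0 ⊕ Ric_N(P_𝔫). -/

import Mathlib

open scoped RealInnerProductSpace

noncomputable section

variable {G : Type*} [NormedAddCommGroup G] [InnerProductSpace ℝ G] [FiniteDimensional ℝ G]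

/-- Orthogonal projection onto the subspace `W`, as a plain map `G → G`. -/
def pr (W : Submodule ℝ G) : G → G := fun v => (W.orthogonalProjection v : G)

/-- Orthogonal projection onto the subspace `W`, as a continuous linear endomorphism of `G`. -/
def projL (W : Submodule ℝ G) : G →L[ℝ] G := W.subtypeL.comp W.orthogonalProjection

variable (br : G →ₗ[ℝ] G →ₗ[ℝ] G)

/-- `br` is a Lie bracket making `G` a real Lie algebra, and the inner product `Q` of `G`
is ad-invariant: `Q([Z,X],Y) + Q(X,[Z,Y]) = 0`. -/
structure IsLieQ : Prop where
  alt : ∀ x : G, br x x = 0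
  jacobi : ∀ x y z : G, br x (br y z) + br y (br z x) + br z (br x y) = 0
  adInv : ∀ Z X Y : G, ⟪br Z X, Y⟫ + ⟪X, br Z Y⟫ = 0

/-- `𝔥 ⊆ 𝔨` are Lie subalgebras of `𝔤` with `[𝔨,𝔨] ⊆ 𝔥`. -/
structure IsToralPair (𝔥 𝔨 : Submodule ℝ G) : Prop where
  subalg_h : ∀ x ∈ 𝔥, ∀ y ∈ 𝔥, br x y ∈ 𝔥
  subalg_k : ∀ x ∈ 𝔨, ∀ y ∈ 𝔨, br x y ∈ 𝔨
  h_le_k : 𝔥 ≤ 𝔨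
  bk_in_h : ∀ x ∈ 𝔨, ∀ y ∈ 𝔨, br x y ∈ 𝔥

/-- no nonzero element of `𝔫 = 𝔨ᗮ` commutes with all of `𝔨`. -/
def NoTrivial (𝔨 : Submodule ℝ G) : Prop :=
  ∀ X ∈ 𝔨ᗮ, (∀ k ∈ 𝔨, br k X = 0) → X = 0

/-- `A` maps `W` into itself and is `Q`-symmetric on `W`. -/
def SymOn (W : Submodule ℝ G) (A : G →L[ℝ] G) : Prop :=
  (∀ v ∈ W, A v ∈ W) ∧ ∀ v ∈ W, ∀ w ∈ W, ⟪A v, w⟫ = ⟪v, A w⟫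

/-- `A` is positive definite on the subspace `W`. -/
def PosDefOn (W : Submodule ℝ G) (A : G →L[ℝ] G) : Prop :=
  ∀ v ∈ W, v ≠ 0 → 0 < ⟪A v, v⟫

/-- `A` commutes with `ad(k)|_𝔫` on `𝔫 = 𝔨ᗮ`, for every `k ∈ 𝔨`. -/
def CommAd (𝔨 : Submodule ℝ G) (A : G →L[ℝ] G) : Prop :=
  ∀ k ∈ 𝔨, ∀ X ∈ 𝔨ᗮ, A (br k X) = br k (A X)

/-- `Ainv` maps `W` to itself and is a two-sided inverse of `A` on the subspace `W`. -/
def InvOn' (W : Submodule ℝ G) (A Ainv : G →L[ℝ] G) : Prop :=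
  (∀ v ∈ W, Ainv v ∈ W) ∧ (∀ v ∈ W, Ainv (A v) = v) ∧ (∀ v ∈ W, A (Ainv v) = v)

/-- The explicit formula for the extended operator `S(P)(V).W` of the generalized submersion
metric `P = P_𝔱 ⊕ P_𝔫`, where `𝔱 = 𝔨 ⊓ 𝔥ᗮ`, `𝔪 = 𝔥ᗮ`, `𝔫 = 𝔨ᗮ`:
`S(P)(T).T' = 0`, `S(P)(T).Y = -[T,Y] + (1/2) P_𝔫⁻¹.[P_𝔱.T, Y]`,
`S(P)(X).T' = -(1/2) P_𝔫⁻¹.[X, P_𝔱.T']`,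
`S(P)(X).Y = -(1/2)[X,Y]_𝔪 - (1/2) P_𝔫⁻¹.(([X,P_𝔫.Y])_𝔫 - ([P_𝔫.X,Y])_𝔫)`. -/
def Sfun (𝔥 𝔨 : Submodule ℝ G) (pt pn pninv : G →L[ℝ] G) (V W : G) : G :=
  -(br (pr (𝔨 ⊓ 𝔥ᗮ) V) (pr 𝔨ᗮ W)) + (2⁻¹ : ℝ) • pninv (br (pt (pr (𝔨 ⊓ 𝔥ᗮ) V)) (pr 𝔨ᗮ W))
    - (2⁻¹ : ℝ) • pninv (br (pr 𝔨ᗮ V) (pt (pr (𝔨 ⊓ 𝔥ᗮ) W)))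
    - (2⁻¹ : ℝ) • pr 𝔥ᗮ (br (pr 𝔨ᗮ V) (pr 𝔨ᗮ W))
    - (2⁻¹ : ℝ) • pninv (pr 𝔨ᗮ (br (pr 𝔨ᗮ V) (pn (pr 𝔨ᗮ W)))
        - pr 𝔨ᗮ (br (pn (pr 𝔨ᗮ V)) (pr 𝔨ᗮ W)))

/-- The extended curvature `Rm(P)(V₁,V₂).W` of the generalized submersion metric
`P = P_𝔱 ⊕ P_𝔫`: `Rm(P)(V₁,V₂) = ad([V₁,V₂]_𝔥)|_𝔪 - [S(P)(V₁),S(P)(V₂)] - S(P)([V₁,V₂]_𝔪)`. -/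
def Rmfun (𝔥 𝔨 : Submodule ℝ G) (pt pn pninv : G →L[ℝ] G) (V₁ V₂ W : G) : G :=
  br (pr 𝔥 (br V₁ V₂)) W
    - (Sfun br 𝔥 𝔨 pt pn pninv V₁ (Sfun br 𝔥 𝔨 pt pn pninv V₂ W)
        - Sfun br 𝔥 𝔨 pt pn pninv V₂ (Sfun br 𝔥 𝔨 pt pn pninv V₁ W))
    - Sfun br 𝔥 𝔨 pt pn pninv (pr 𝔥ᗮ (br V₁ V₂)) W

/-- `Tr (𝔪 ∋ Z ↦ Rm(P)(V₁, Z).V₂)`, computed via an orthonormal basis of `𝔪 = 𝔥ᗮ`. -/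
def RicBilin (𝔥 𝔨 : Submodule ℝ G) (pt pn pninv : G →L[ℝ] G) (V₁ V₂ : G) : ℝ :=
  ∑ i, ⟪((stdOrthonormalBasis ℝ 𝔥ᗮ) i : G),
        Rmfun br 𝔥 𝔨 pt pn pninv V₁ ((stdOrthonormalBasis ℝ 𝔥ᗮ) i : G) V₂⟫

/-- `Ric` is the extended Ricci endomorphism of the generalized submersion metric
`P = P_𝔱 ⊕ P_𝔫`: it maps `𝔪 = 𝔥ᗮ` to `𝔪`, vanishes on `𝔪ᗮ`, and satisfies
`Q(Ric.V₁, V₂) = Tr(𝔪 ∋ Z ↦ Rm(P)(V₁,Z).V₂)` for all `V₁, V₂ ∈ 𝔪`. -/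
def IsExtRic (𝔥 𝔨 : Submodule ℝ G) (pt pn pninv Ric : G →L[ℝ] G) : Prop :=
  Ric = (projL 𝔥ᗮ).comp (Ric.comp (projL 𝔥ᗮ)) ∧
  ∀ V₁ ∈ 𝔥ᗮ, ∀ V₂ ∈ 𝔥ᗮ, ⟪Ric V₁, V₂⟫ = RicBilin br 𝔥 𝔨 pt pn pninv V₁ V₂

/-- `SN` is the operator `S_N(P_𝔫)` of the base space `N`, relative to the reductive
decomposition `𝔤 = 𝔨 ⊕ 𝔫`, defined by the implicit equation
`-2 Q(S_N(X).Y, Z) = Q([X,Y]_𝔫, Z) + Q([P_𝔫⁻¹.Z, X]_𝔫, P_𝔫.Y) + Q([P_𝔫⁻¹.Z, Y]_𝔫, P_𝔫.X)`. -/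
def IsSN (𝔨 : Submodule ℝ G) (pn pninv : G →L[ℝ] G) (SN : G → G → G) : Prop :=
  (∀ X ∈ 𝔨ᗮ, ∀ Y ∈ 𝔨ᗮ, SN X Y ∈ 𝔨ᗮ) ∧
  ∀ X ∈ 𝔨ᗮ, ∀ Y ∈ 𝔨ᗮ, ∀ Z ∈ 𝔨ᗮ,
    (-2 : ℝ) * ⟪SN X Y, Z⟫ =
      ⟪pr 𝔨ᗮ (br X Y), Z⟫ + ⟪pr 𝔨ᗮ (br (pninv Z) X), pn Y⟫ + ⟪pr 𝔨ᗮ (br (pninv Z) Y), pn X⟫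

/-- The curvature `Rm_N(P_𝔫)(X,Y).W` of the base space `N`:
`Rm_N(X,Y) = ad([X,Y]_𝔨)|_𝔫 - [S_N(X),S_N(Y)] - S_N([X,Y]_𝔫)`. -/
def RmNfun (𝔨 : Submodule ℝ G) (SN : G → G → G) (X Y W : G) : G :=
  br (pr 𝔨 (br X Y)) W - (SN X (SN Y W) - SN Y (SN X W)) - SN (pr 𝔨ᗮ (br X Y)) W

/-- `RicN` is the Ricci endomorphism `Ric_N(P_𝔫)` of the base space `N`, relative to the
operator `SN = S_N(P_𝔫)`: it maps `𝔫 = 𝔨ᗮ` to `𝔫`, vanishes on `𝔫ᗮ`, and satisfies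
`Q(RicN.X, Y) = Tr(𝔫 ∋ Z ↦ Rm_N(X,Z).Y)` for all `X, Y ∈ 𝔫`. -/
def IsBaseRic (𝔨 : Submodule ℝ G) (SN : G → G → G) (RicN : G →L[ℝ] G) : Prop :=
  RicN = (projL 𝔨ᗮ).comp (RicN.comp (projL 𝔨ᗮ)) ∧
  ∀ X ∈ 𝔨ᗮ, ∀ Y ∈ 𝔨ᗮ,
    ⟪RicN X, Y⟫ = ∑ i, ⟪((stdOrthonormalBasis ℝ 𝔨ᗮ) i : G),
      RmNfun br 𝔨 SN X ((stdOrthonormalBasis ℝ 𝔨ᗮ) i : G) Y⟫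

set_option linter.unusedSectionVars false
set_option maxHeartbeats 1000000

section Aux

lemma pr_mem (W : Submodule ℝ G) (v : G) : pr W v ∈ W := (W.orthogonalProjection v).2

@[simp] lemma pr_add (W : Submodule ℝ G) (x y : G) : pr W (x + y) = pr W x + pr W y := by
  simp [pr]

@[simp] lemma pr_smul (W : Submodule ℝ G) (c : ℝ) (x : G) : pr W (c • x) = c • pr W x := by
  simp [pr]

@[simp] lemma pr_neg (W : Submodule ℝ G) (x : G) : pr W (-x) = - pr W x := by simp [pr]

@[simp] lemma pr_sub (W : Submodule ℝ G) (x y : G) : pr W (x - y) = pr W x - pr W y := by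
  simp [pr]

@[simp] lemma pr_zero (W : Submodule ℝ G) : pr W (0 : G) = 0 := by simp [pr]

lemma pr_of_mem {W : Submodule ℝ G} {v : G} (h : v ∈ W) : pr W v = v :=
  congrArg Subtype.val (Submodule.orthogonalProjectionOnto_mem_subspace_eq_self (⟨v, h⟩ : W))

lemma pr_of_mem_orth {W : Submodule ℝ G} {v : G} (h : v ∈ Wᗮ) : pr W v = 0 := by
  have := Submodule.orthogonalProjectionOnto_apply_of_mem_orthogonal h
  simpa [pr] using congrArg (Subtype.val : W → G) this

lemma pr_eq_of {W : Submodule ℝ G} {v u : G} (hu : u ∈ W)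
    (h : ∀ w ∈ W, ⟪v - u, w⟫ = 0) : pr W v = u :=
  Submodule.eq_starProjection_of_mem_of_inner_eq_zero hu h

lemma inner_pr_left (W : Submodule ℝ G) (v w : G) (hw : w ∈ W) : ⟪pr W v, w⟫ = ⟪v, w⟫ := by
  have h := Submodule.starProjection_inner_eq_zero v w hw
  rw [inner_sub_left] at h
  have : ⟪v, w⟫ - ⟪pr W v, w⟫ = 0 := h
  linarith

lemma inner_pr_right (W : Submodule ℝ G) (v w : G) (hw : w ∈ W) : ⟪w, pr W v⟫ = ⟪w, v⟫ := by
  rw [real_inner_comm, inner_pr_left W v w hw, real_inner_comm]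

lemma inner_of_orth {W : Submodule ℝ G} {v w : G} (hv : v ∈ W) (hw : w ∈ Wᗮ) : ⟪v, w⟫ = 0 :=
  (Submodule.mem_orthogonal W w).1 hw v hv

lemma inner_of_orth' {W : Submodule ℝ G} {v w : G} (hv : v ∈ Wᗮ) (hw : w ∈ W) : ⟪v, w⟫ = 0 := by
  rw [real_inner_comm]; exact inner_of_orth hw hv

lemma eq_zero_of_orth {W : Submodule ℝ G} {v : G} (hv : v ∈ W)
    (h : ∀ w ∈ W, ⟪v, w⟫ = 0) : v = 0 := by
  have := h v hv
  rwa [real_inner_self_eq_norm_sq, pow_eq_zero_iff, norm_eq_zero] at this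
  · exact two_ne_zero

variable {br : G →ₗ[ℝ] G →ₗ[ℝ] G}

lemma br_skew (hLie : IsLieQ br) (x y : G) : br x y = - br y x := by
  have h := hLie.alt (x + y)
  simp only [map_add, LinearMap.add_apply, hLie.alt, zero_add, add_zero] at h
  exact eq_neg_of_add_eq_zero_right h

lemma adinv (hLie : IsLieQ br) (z x y : G) : ⟪br z x, y⟫ = -⟪x, br z y⟫ := by
  have := hLie.adInv z x y; linarith

lemma jac (hLie : IsLieQ br) (x y z : G) :
    br (br x y) z = br x (br y z) - br y (br x z) := by
  have j := hLie.jacobi x y z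
  rw [br_skew hLie z x, map_neg, br_skew hLie z (br x y)] at j
  have : br y (br x z) - (br x (br y z) - br y (br x z)) +
      (br x (br y z) - br y (br x z)) = br y (br x z) := by abel
  calc br (br x y) z = br (br x y) z + 0 := by abel
    _ = br x (br y z) - br y (br x z) := by
        rw [← j]; abel

section Pair
variable {𝔥 𝔨 : Submodule ℝ G} (hLie : IsLieQ br) (hpair : IsToralPair br 𝔥 𝔨)
include hLie hpair

omit hLie in
lemma n_le_m : 𝔨ᗮ ≤ 𝔥ᗮ := Submodule.orthogonal_le hpair.h_le_k

omit hLie hpair in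
lemma t_le_k : 𝔨 ⊓ 𝔥ᗮ ≤ 𝔨 := inf_le_left

omit hLie hpair in
lemma t_le_m : 𝔨 ⊓ 𝔥ᗮ ≤ 𝔥ᗮ := inf_le_right

lemma br_k_n {k X : G} (hk : k ∈ 𝔨) (hX : X ∈ 𝔨ᗮ) : br k X ∈ 𝔨ᗮ := by
  rw [Submodule.mem_orthogonal]
  intro u hu
  have h1 : ⟪br k u, X⟫ = -⟪u, br k X⟫ := adinv hLie k u X
  have h2 : ⟪br k u, X⟫ = 0 := inner_of_orth (hpair.subalg_k k hk u hu) hX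
  linarith

lemma br_h_m {h v : G} (hh : h ∈ 𝔥) (hv : v ∈ 𝔥ᗮ) : br h v ∈ 𝔥ᗮ := by
  rw [Submodule.mem_orthogonal]
  intro u hu
  have h1 : ⟪br h u, v⟫ = -⟪u, br h v⟫ := adinv hLie h u v
  have h2 : ⟪br h u, v⟫ = 0 := inner_of_orth (hpair.subalg_h h hh u hu) hv
  linarith

lemma br_h_t {h t : G} (hh : h ∈ 𝔥) (ht : t ∈ 𝔨 ⊓ 𝔥ᗮ) : br h t = 0 := by
  refine eq_zero_of_orth (hpair.bk_in_h h (hpair.h_le_k hh) t ht.1) ?_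
  intro w hw
  exact inner_of_orth' (br_h_m hLie hpair hh ht.2) hw

lemma br_t_n {t X : G} (ht : t ∈ 𝔨 ⊓ 𝔥ᗮ) (hX : X ∈ 𝔨ᗮ) : br t X ∈ 𝔨ᗮ :=
  br_k_n hLie hpair ht.1 hX

omit hLie in
lemma t_orth_n {t X : G} (ht : t ∈ 𝔨 ⊓ 𝔥ᗮ) (hX : X ∈ 𝔨ᗮ) : ⟪t, X⟫ = 0 :=
  inner_of_orth ht.1 hX

omit hLie in
lemma pr_k_eq (v : G) : pr 𝔨 v = pr 𝔥 v + pr (𝔨 ⊓ 𝔥ᗮ) v := by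
  refine pr_eq_of (𝔨.add_mem (hpair.h_le_k (pr_mem 𝔥 v)) (pr_mem (𝔨 ⊓ 𝔥ᗮ) v).1) ?_
  intro w hw
  have hdecw : w = pr 𝔥 w + (w - pr 𝔥 w) := by abel
  have hth : w - pr 𝔥 w ∈ 𝔨 ⊓ 𝔥ᗮ :=
    ⟨𝔨.sub_mem hw (hpair.h_le_k (pr_mem 𝔥 w)), Submodule.sub_starProjection_mem_orthogonal w⟩
  rw [hdecw, inner_add_right]
  have e1 : ⟪v - (pr 𝔥 v + pr (𝔨 ⊓ 𝔥ᗮ) v), pr 𝔥 w⟫ = 0 := by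
    have a1 : ⟪v - pr 𝔥 v, pr 𝔥 w⟫ = 0 :=
      Submodule.starProjection_inner_eq_zero v _ (pr_mem 𝔥 w)
    have a2 : ⟪pr (𝔨 ⊓ 𝔥ᗮ) v, pr 𝔥 w⟫ = 0 :=
      inner_of_orth' (pr_mem (𝔨 ⊓ 𝔥ᗮ) v).2 (pr_mem 𝔥 w)
    have : v - (pr 𝔥 v + pr (𝔨 ⊓ 𝔥ᗮ) v) = (v - pr 𝔥 v) - pr (𝔨 ⊓ 𝔥ᗮ) v := by abel
    rw [this, inner_sub_left, a1, a2]; ring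
  have e2 : ⟪v - (pr 𝔥 v + pr (𝔨 ⊓ 𝔥ᗮ) v), w - pr 𝔥 w⟫ = 0 := by
    have a1 : ⟪v - pr (𝔨 ⊓ 𝔥ᗮ) v, w - pr 𝔥 w⟫ = 0 :=
      Submodule.starProjection_inner_eq_zero v _ hth
    have a2 : ⟪pr 𝔥 v, w - pr 𝔥 w⟫ = 0 :=
      inner_of_orth (pr_mem 𝔥 v) hth.2
    have : v - (pr 𝔥 v + pr (𝔨 ⊓ 𝔥ᗮ) v) = (v - pr (𝔨 ⊓ 𝔥ᗮ) v) - pr 𝔥 v := by abel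
    rw [this, inner_sub_left, a1, a2]; ring
  rw [e1, e2]; ring

omit hLie in
lemma pr_m_eq (v : G) : pr 𝔥ᗮ v = pr (𝔨 ⊓ 𝔥ᗮ) v + pr 𝔨ᗮ v := by
  refine pr_eq_of (𝔥ᗮ.add_mem (pr_mem (𝔨 ⊓ 𝔥ᗮ) v).2 (n_le_m hpair (pr_mem 𝔨ᗮ v))) ?_
  intro w hw
  have hdecw : w = (w - (w - pr 𝔨 w)) + (w - pr 𝔨 w) := by abel
  have hn : w - pr 𝔨 w ∈ 𝔨ᗮ := Submodule.sub_starProjection_mem_orthogonal w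
  have ht : w - (w - pr 𝔨 w) ∈ 𝔨 ⊓ 𝔥ᗮ := by
    refine ⟨by simpa using pr_mem 𝔨 w, 𝔥ᗮ.sub_mem hw (n_le_m hpair hn)⟩
  rw [hdecw, inner_add_right]
  have e1 : ⟪v - (pr (𝔨 ⊓ 𝔥ᗮ) v + pr 𝔨ᗮ v), w - (w - pr 𝔨 w)⟫ = 0 := by
    have a1 : ⟪v - pr (𝔨 ⊓ 𝔥ᗮ) v, w - (w - pr 𝔨 w)⟫ = 0 :=
      Submodule.starProjection_inner_eq_zero v _ ht
    have a2 : ⟪pr 𝔨ᗮ v, w - (w - pr 𝔨 w)⟫ = 0 :=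
      inner_of_orth' (pr_mem 𝔨ᗮ v) ht.1
    have : v - (pr (𝔨 ⊓ 𝔥ᗮ) v + pr 𝔨ᗮ v) = (v - pr (𝔨 ⊓ 𝔥ᗮ) v) - pr 𝔨ᗮ v := by abel
    rw [this, inner_sub_left, a1, a2]; ring
  have e2 : ⟪v - (pr (𝔨 ⊓ 𝔥ᗮ) v + pr 𝔨ᗮ v), w - pr 𝔨 w⟫ = 0 := by
    have a1 : ⟪v - pr 𝔨ᗮ v, w - pr 𝔨 w⟫ = 0 :=
      Submodule.starProjection_inner_eq_zero v _ hn
    have a2 : ⟪pr (𝔨 ⊓ 𝔥ᗮ) v, w - pr 𝔨 w⟫ = 0 :=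
      inner_of_orth (pr_mem (𝔨 ⊓ 𝔥ᗮ) v).1 hn
    have : v - (pr (𝔨 ⊓ 𝔥ᗮ) v + pr 𝔨ᗮ v) = (v - pr 𝔨ᗮ v) - pr (𝔨 ⊓ 𝔥ᗮ) v := by abel
    rw [this, inner_sub_left, a1, a2]; ring
  rw [e1, e2]; ring

lemma pr_n_br {k : G} (hk : k ∈ 𝔨) (v : G) :
    pr 𝔨ᗮ (br k v) = br k (pr 𝔨ᗮ v) := by
  refine pr_eq_of (br_k_n hLie hpair hk (pr_mem 𝔨ᗮ v)) ?_
  intro w hw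
  have hmem : v - pr 𝔨ᗮ v ∈ 𝔨 := by
    have := Submodule.sub_starProjection_mem_orthogonal (K := 𝔨ᗮ) v
    rwa [Submodule.orthogonal_orthogonal] at this
  have : br k v - br k (pr 𝔨ᗮ v) = br k (v - pr 𝔨ᗮ v) := by
    rw [map_sub]
  rw [this]
  exact inner_of_orth (hpair.subalg_k k hk _ hmem) hw

end Pair

/-- Explicit formula for the operator `S_N(P_𝔫)` of the base. -/
def sExp (bb : G →ₗ[ℝ] G →ₗ[ℝ] G) (𝔨 : Submodule ℝ G) (pn pninv : G →L[ℝ] G) (X Y : G) : G :=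
  -((2⁻¹ : ℝ) • pr 𝔨ᗮ (bb X Y)) -
    (2⁻¹ : ℝ) • pninv (pr 𝔨ᗮ (bb X (pn Y)) - pr 𝔨ᗮ (bb (pn X) Y))

section NN

variable {𝔥 𝔨 : Submodule ℝ G} {pn pninv : G →L[ℝ] G}

lemma prn_of_k {v : G} (hv : v ∈ 𝔨) : pr 𝔨ᗮ v = 0 :=
  pr_of_mem_orth (Submodule.le_orthogonal_orthogonal 𝔨 hv)

lemma prt_of_n {v : G} (hv : v ∈ 𝔨ᗮ) : pr (𝔨 ⊓ 𝔥ᗮ) v = 0 :=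
  pr_of_mem_orth (Submodule.orthogonal_le (inf_le_left : 𝔨 ⊓ 𝔥ᗮ ≤ 𝔨) hv)

lemma prh_of_n (hpair : IsToralPair br 𝔥 𝔨) {v : G} (hv : v ∈ 𝔨ᗮ) : pr 𝔥 v = 0 :=
  pr_of_mem_orth (n_le_m hpair hv)

lemma pninv_symm (hpn : SymOn 𝔨ᗮ pn) (hpninv : InvOn' 𝔨ᗮ pn pninv)
    {x y : G} (hx : x ∈ 𝔨ᗮ) (hy : y ∈ 𝔨ᗮ) : ⟪pninv x, y⟫ = ⟪x, pninv y⟫ := by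
  have h1 : ⟪pninv x, y⟫ = ⟪pninv x, pn (pninv y)⟫ := by rw [hpninv.2.2 y hy]
  have h2 : ⟪pn (pninv x), pninv y⟫ = ⟪pninv x, pn (pninv y)⟫ :=
    hpn.2 (pninv x) (hpninv.1 x hx) (pninv y) (hpninv.1 y hy)
  rw [h1, ← h2, hpninv.2.2 x hx]

lemma pninv_comm (hLie : IsLieQ br) (hpair : IsToralPair br 𝔥 𝔨)
    (hpncomm : CommAd br 𝔨 pn) (hpninv : InvOn' 𝔨ᗮ pn pninv)
    {k X : G} (hk : k ∈ 𝔨) (hX : X ∈ 𝔨ᗮ) : pninv (br k X) = br k (pninv X) := by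
  have h1 : pn (br k (pninv X)) = br k X := by
    rw [hpncomm k hk (pninv X) (hpninv.1 X hX), hpninv.2.2 X hX]
  calc pninv (br k X) = pninv (pn (br k (pninv X))) := by rw [h1]
    _ = br k (pninv X) := hpninv.2.1 _ (br_k_n hLie hpair hk (hpninv.1 X hX))

lemma sExp_mem (hpninv : InvOn' 𝔨ᗮ pn pninv) (X Y : G) :
    sExp br 𝔨 pn pninv X Y ∈ 𝔨ᗮ := by
  refine Submodule.sub_mem _ (Submodule.neg_mem _ (Submodule.smul_mem _ _ (pr_mem _ _))) ?_
  exact Submodule.smul_mem _ _ (hpninv.1 _ (Submodule.sub_mem _ (pr_mem _ _) (pr_mem _ _)))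

@[simp] lemma sExp_zero₁ (Y : G) : sExp br 𝔨 pn pninv 0 Y = 0 := by
  simp [sExp, LinearMap.map_zero₂]

@[simp] lemma sExp_zero₂ (X : G) : sExp br 𝔨 pn pninv X 0 = 0 := by
  simp [sExp]

lemma sExp_add₁ (X X' Y : G) : sExp br 𝔨 pn pninv (X + X') Y =
    sExp br 𝔨 pn pninv X Y + sExp br 𝔨 pn pninv X' Y := by
  simp only [sExp, map_add, LinearMap.add_apply, pr_add, smul_add]
  rw [show pr 𝔨ᗮ (br X (pn Y)) + pr 𝔨ᗮ (br X' (pn Y)) -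
      (pr 𝔨ᗮ (br (pn X) Y) + pr 𝔨ᗮ (br (pn X') Y)) =
      (pr 𝔨ᗮ (br X (pn Y)) - pr 𝔨ᗮ (br (pn X) Y)) +
      (pr 𝔨ᗮ (br X' (pn Y)) - pr 𝔨ᗮ (br (pn X') Y)) by abel, map_add, smul_add]
  abel

lemma sExp_add₂ (X Y Y' : G) : sExp br 𝔨 pn pninv X (Y + Y') =
    sExp br 𝔨 pn pninv X Y + sExp br 𝔨 pn pninv X Y' := by
  simp only [sExp, map_add, LinearMap.add_apply, pr_add, smul_add]
  rw [show pr 𝔨ᗮ (br X (pn Y)) + pr 𝔨ᗮ (br X (pn Y')) -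
      (pr 𝔨ᗮ (br (pn X) Y) + pr 𝔨ᗮ (br (pn X) Y')) =
      (pr 𝔨ᗮ (br X (pn Y)) - pr 𝔨ᗮ (br (pn X) Y)) +
      (pr 𝔨ᗮ (br X (pn Y')) - pr 𝔨ᗮ (br (pn X) Y')) by abel, map_add, smul_add]
  abel

lemma sExp_smul₁ (c : ℝ) (X Y : G) : sExp br 𝔨 pn pninv (c • X) Y =
    c • sExp br 𝔨 pn pninv X Y := by
  simp only [sExp, map_smul, LinearMap.smul_apply, LinearMap.map_smul, pr_smul, ← smul_sub,
    map_smul]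
  module

lemma sExp_smul₂ (c : ℝ) (X Y : G) : sExp br 𝔨 pn pninv X (c • Y) =
    c • sExp br 𝔨 pn pninv X Y := by
  simp only [sExp, map_smul, LinearMap.smul_apply, LinearMap.map_smul, pr_smul, ← smul_sub,
    map_smul]
  module

lemma sExp_neg₁ (X Y : G) : sExp br 𝔨 pn pninv (-X) Y = - sExp br 𝔨 pn pninv X Y := by
  have := sExp_smul₁ (br := br) (𝔨 := 𝔨) (pn := pn) (pninv := pninv) (-1 : ℝ) X Y
  simpa using this

lemma sExp_neg₂ (X Y : G) : sExp br 𝔨 pn pninv X (-Y) = - sExp br 𝔨 pn pninv X Y := by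
  have := sExp_smul₂ (br := br) (𝔨 := 𝔨) (pn := pn) (pninv := pninv) (-1 : ℝ) X Y
  simpa using this

lemma sExp_equiv (hLie : IsLieQ br) (hpair : IsToralPair br 𝔥 𝔨)
    (hpncomm : CommAd br 𝔨 pn) (hpninv : InvOn' 𝔨ᗮ pn pninv)
    {k X Y : G} (hk : k ∈ 𝔨) (hX : X ∈ 𝔨ᗮ) (hY : Y ∈ 𝔨ᗮ) :
    br k (sExp br 𝔨 pn pninv X Y) =
      sExp br 𝔨 pn pninv (br k X) Y + sExp br 𝔨 pn pninv X (br k Y) := by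
  have jk : ∀ a b : G, br k (br a b) = br (br k a) b + br a (br k b) := by
    intro a b
    rw [jac hLie k a b]; abel
  have hc : br k (pninv (pr 𝔨ᗮ (br X (pn Y)) - pr 𝔨ᗮ (br (pn X) Y))) =
      pninv (br k (pr 𝔨ᗮ (br X (pn Y)) - pr 𝔨ᗮ (br (pn X) Y))) :=
    (pninv_comm hLie hpair hpncomm hpninv hk
      (Submodule.sub_mem _ (pr_mem _ _) (pr_mem _ _))).symm
  rw [sExp, map_sub, map_neg, map_smul, map_smul, hc, map_sub,
    ← pr_n_br hLie hpair hk, ← pr_n_br hLie hpair hk, ← pr_n_br hLie hpair hk,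
    jk X Y, jk X (pn Y), jk (pn X) Y,
    ← hpncomm k hk Y hY, ← hpncomm k hk X hX]
  simp only [sExp, pr_add, map_add, smul_add]
  rw [show pr 𝔨ᗮ (br (br k X) (pn Y)) + pr 𝔨ᗮ (br X (pn (br k Y))) -
      (pr 𝔨ᗮ (br (pn (br k X)) Y) + pr 𝔨ᗮ (br (pn X) (br k Y))) =
      (pr 𝔨ᗮ (br (br k X) (pn Y)) - pr 𝔨ᗮ (br (pn (br k X)) Y)) +
      (pr 𝔨ᗮ (br X (pn (br k Y))) - pr 𝔨ᗮ (br (pn X) (br k Y))) by abel, map_add, smul_add]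
  abel

lemma SN_eq (hLie : IsLieQ br) (hpn : SymOn 𝔨ᗮ pn) (hpninv : InvOn' 𝔨ᗮ pn pninv)
    {SN : G → G → G} (hSN : IsSN br 𝔨 pn pninv SN)
    {X Y : G} (hX : X ∈ 𝔨ᗮ) (hY : Y ∈ 𝔨ᗮ) :
    SN X Y = sExp br 𝔨 pn pninv X Y := by
  have hmem : SN X Y - sExp br 𝔨 pn pninv X Y ∈ 𝔨ᗮ :=
    Submodule.sub_mem _ (hSN.1 X hX Y hY) (sExp_mem hpninv X Y)
  have key : ∀ w ∈ 𝔨ᗮ, ⟪SN X Y - sExp br 𝔨 pn pninv X Y, w⟫ = 0 := by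
    intro w hw
    have h1 := hSN.2 X hX Y hY w hw
    have hsE : ⟪sExp br 𝔨 pn pninv X Y, w⟫ =
        -(2⁻¹ : ℝ) * (⟪pr 𝔨ᗮ (br X Y), w⟫ + ⟪pr 𝔨ᗮ (br (pninv w) X), pn Y⟫
          + ⟪pr 𝔨ᗮ (br (pninv w) Y), pn X⟫) := by
      have hb : ⟪pr 𝔨ᗮ (br X (pn Y)), pninv w⟫ = ⟪pr 𝔨ᗮ (br (pninv w) X), pn Y⟫ := by
        rw [inner_pr_left _ _ _ (hpninv.1 w hw), inner_pr_left _ _ _ (hpn.1 Y hY),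
          adinv hLie X (pn Y) (pninv w), br_skew hLie X (pninv w), inner_neg_right,
          real_inner_comm]
        ring_nf
      have hcc : ⟪pr 𝔨ᗮ (br (pn X) Y), pninv w⟫ = -⟪pr 𝔨ᗮ (br (pninv w) Y), pn X⟫ := by
        rw [inner_pr_left _ _ _ (hpninv.1 w hw), inner_pr_left _ _ _ (hpn.1 X hX),
          adinv hLie (pn X) Y (pninv w), br_skew hLie (pn X) (pninv w), inner_neg_right,
          adinv hLie (pninv w) Y (pn X)]
      have hsplit : ⟪pninv (pr 𝔨ᗮ (br X (pn Y)) - pr 𝔨ᗮ (br (pn X) Y)), w⟫ =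
          ⟪pr 𝔨ᗮ (br (pninv w) X), pn Y⟫ + ⟪pr 𝔨ᗮ (br (pninv w) Y), pn X⟫ := by
        rw [pninv_symm hpn hpninv (Submodule.sub_mem _ (pr_mem _ _) (pr_mem _ _)) hw,
          inner_sub_left, hb, hcc]
        ring
      rw [sExp, inner_sub_left, inner_neg_left, real_inner_smul_left, real_inner_smul_left, hsplit]
      ring
    rw [inner_sub_left, hsE]
    linarith
  have h0 := eq_zero_of_orth hmem key
  exact sub_eq_zero.mp h0

lemma Sfun_eq0 (hpair : IsToralPair br 𝔥 𝔨) (V W : G) :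
    Sfun br 𝔥 𝔨 0 pn pninv V W =
      -(br (pr (𝔨 ⊓ 𝔥ᗮ) V) (pr 𝔨ᗮ W))
        - (2⁻¹ : ℝ) • pr (𝔨 ⊓ 𝔥ᗮ) (br (pr 𝔨ᗮ V) (pr 𝔨ᗮ W))
        + sExp br 𝔨 pn pninv (pr 𝔨ᗮ V) (pr 𝔨ᗮ W) := by
  rw [Sfun, sExp, pr_m_eq hpair]
  simp only [ContinuousLinearMap.zero_apply, map_zero, LinearMap.map_zero₂, smul_zero,
    LinearMap.zero_apply, smul_add, add_zero, sub_zero]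
  abel

end NN

section SE

variable {𝔥 𝔨 : Submodule ℝ G} {pn pninv : G →L[ℝ] G}

lemma Sfun_t_any (hpair : IsToralPair br 𝔥 𝔨) {T : G} (hT : T ∈ 𝔨 ⊓ 𝔥ᗮ) (w : G) :
    Sfun br 𝔥 𝔨 0 pn pninv T w = -(br T (pr 𝔨ᗮ w)) := by
  rw [Sfun_eq0 hpair, pr_of_mem hT, prn_of_k hT.1]
  simp [LinearMap.map_zero₂]

lemma Sfun_n_any (hpair : IsToralPair br 𝔥 𝔨) {X : G} (hX : X ∈ 𝔨ᗮ) (w : G) :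
    Sfun br 𝔥 𝔨 0 pn pninv X w =
      -((2⁻¹ : ℝ) • pr (𝔨 ⊓ 𝔥ᗮ) (br X (pr 𝔨ᗮ w))) + sExp br 𝔨 pn pninv X (pr 𝔨ᗮ w) := by
  rw [Sfun_eq0 hpair, prt_of_n hX, pr_of_mem hX]
  simp [LinearMap.map_zero₂]

lemma Sfun_k₂ (hpair : IsToralPair br 𝔥 𝔨) {w : G} (hw : w ∈ 𝔨) (V : G) :
    Sfun br 𝔥 𝔨 0 pn pninv V w = 0 := by
  rw [Sfun_eq0 hpair, prn_of_k hw]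
  simp

lemma Sfun_zero₂ (hpair : IsToralPair br 𝔥 𝔨) (V : G) :
    Sfun br 𝔥 𝔨 0 pn pninv V 0 = 0 := by
  rw [Sfun_eq0 hpair]
  simp

lemma Sfun_zero₁ (hpair : IsToralPair br 𝔥 𝔨) (w : G) :
    Sfun br 𝔥 𝔨 0 pn pninv 0 w = 0 := by
  rw [Sfun_eq0 hpair]
  simp [LinearMap.map_zero₂]

lemma Sfun_add₁ (hpair : IsToralPair br 𝔥 𝔨) (v v' w : G) :
    Sfun br 𝔥 𝔨 0 pn pninv (v + v') w =
      Sfun br 𝔥 𝔨 0 pn pninv v w + Sfun br 𝔥 𝔨 0 pn pninv v' w := by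
  simp only [Sfun_eq0 hpair, pr_add, map_add, LinearMap.add_apply, sExp_add₁, smul_add]
  abel

lemma Sfun_add₂ (hpair : IsToralPair br 𝔥 𝔨) (v w w' : G) :
    Sfun br 𝔥 𝔨 0 pn pninv v (w + w') =
      Sfun br 𝔥 𝔨 0 pn pninv v w + Sfun br 𝔥 𝔨 0 pn pninv v w' := by
  simp only [Sfun_eq0 hpair, pr_add, map_add, LinearMap.add_apply, sExp_add₂, smul_add]
  abel

lemma Sfun_smul₁ (hpair : IsToralPair br 𝔥 𝔨) (c : ℝ) (v w : G) :
    Sfun br 𝔥 𝔨 0 pn pninv (c • v) w = c • Sfun br 𝔥 𝔨 0 pn pninv v w := by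
  simp only [Sfun_eq0 hpair, pr_smul, map_smul, LinearMap.smul_apply, sExp_smul₁]
  module

lemma Sfun_smul₂ (hpair : IsToralPair br 𝔥 𝔨) (c : ℝ) (v w : G) :
    Sfun br 𝔥 𝔨 0 pn pninv v (c • w) = c • Sfun br 𝔥 𝔨 0 pn pninv v w := by
  simp only [Sfun_eq0 hpair, pr_smul, map_smul, LinearMap.smul_apply, sExp_smul₂]
  module

lemma Rmfun_addZ (hpair : IsToralPair br 𝔥 𝔨) (V₁ V₂ z z' : G) :
    Rmfun br 𝔥 𝔨 0 pn pninv V₁ (z + z') V₂ =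
      Rmfun br 𝔥 𝔨 0 pn pninv V₁ z V₂ + Rmfun br 𝔥 𝔨 0 pn pninv V₁ z' V₂ := by
  simp only [Rmfun, map_add, LinearMap.add_apply, pr_add, Sfun_add₁ hpair, Sfun_add₂ hpair]
  abel

lemma Rmfun_smulZ (hpair : IsToralPair br 𝔥 𝔨) (V₁ V₂ : G) (c : ℝ) (z : G) :
    Rmfun br 𝔥 𝔨 0 pn pninv V₁ (c • z) V₂ = c • Rmfun br 𝔥 𝔨 0 pn pninv V₁ z V₂ := by
  simp only [Rmfun, map_smul, LinearMap.smul_apply, pr_smul, Sfun_smul₁ hpair,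
    Sfun_smul₂ hpair]
  module

lemma Rmfun_addV₂ (hpair : IsToralPair br 𝔥 𝔨) (V₁ Z w w' : G) :
    Rmfun br 𝔥 𝔨 0 pn pninv V₁ Z (w + w') =
      Rmfun br 𝔥 𝔨 0 pn pninv V₁ Z w + Rmfun br 𝔥 𝔨 0 pn pninv V₁ Z w' := by
  simp only [Rmfun, map_add, LinearMap.add_apply, Sfun_add₂ hpair]
  abel

/-- MAIN1 : the extended curvature with values in `𝔱` vanishes. -/
lemma Rm_val_t (hLie : IsLieQ br) (hpair : IsToralPair br 𝔥 𝔨)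
    {T' : G} (hT' : T' ∈ 𝔨 ⊓ 𝔥ᗮ) (V₁ Z : G) :
    Rmfun br 𝔥 𝔨 0 pn pninv V₁ Z T' = 0 := by
  rw [Rmfun, Sfun_k₂ hpair hT'.1, Sfun_k₂ hpair hT'.1, Sfun_k₂ hpair hT'.1,
    Sfun_zero₂ hpair, Sfun_zero₂ hpair,
    br_h_t hLie hpair (pr_mem 𝔥 (br V₁ Z)) hT']
  abel

/-- MAIN2a. -/
lemma Rm_t_t_n (hLie : IsLieQ br) (hpair : IsToralPair br 𝔥 𝔨)
    {T U Y : G} (hT : T ∈ 𝔨 ⊓ 𝔥ᗮ) (hU : U ∈ 𝔨 ⊓ 𝔥ᗮ) (hY : Y ∈ 𝔨ᗮ) :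
    Rmfun br 𝔥 𝔨 0 pn pninv T U Y = 0 := by
  have hTU : br T U ∈ 𝔥 := hpair.bk_in_h T hT.1 U hU.1
  have hUY : br U Y ∈ 𝔨ᗮ := br_t_n hLie hpair hU hY
  have hTY : br T Y ∈ 𝔨ᗮ := br_t_n hLie hpair hT hY
  rw [Rmfun, pr_of_mem hTU,
    pr_of_mem_orth (Submodule.le_orthogonal_orthogonal 𝔥 hTU), Sfun_zero₁ hpair,
    Sfun_t_any hpair hU, pr_of_mem hY, Sfun_t_any hpair hT, pr_neg, pr_of_mem hUY,
    Sfun_t_any hpair hT, pr_of_mem hY, Sfun_t_any hpair hU, pr_neg, pr_of_mem hTY,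
    jac hLie T U Y]
  simp only [map_neg, neg_neg]
  abel

/-- MAIN2b. -/
lemma Rm_t_n_n (hLie : IsLieQ br) (hpair : IsToralPair br 𝔥 𝔨)
    (hpncomm : CommAd br 𝔨 pn) (hpninv : InvOn' 𝔨ᗮ pn pninv)
    {T W Y : G} (hT : T ∈ 𝔨 ⊓ 𝔥ᗮ) (hW : W ∈ 𝔨ᗮ) (hY : Y ∈ 𝔨ᗮ) :
    Rmfun br 𝔥 𝔨 0 pn pninv T W Y =
      (2⁻¹ : ℝ) • pr (𝔨 ⊓ 𝔥ᗮ) (br W (br T Y)) +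
        (2⁻¹ : ℝ) • pr (𝔨 ⊓ 𝔥ᗮ) (br (br T W) Y) := by
  have hTW : br T W ∈ 𝔨ᗮ := br_t_n hLie hpair hT hW
  have hTY : br T Y ∈ 𝔨ᗮ := br_t_n hLie hpair hT hY
  have heq := sExp_equiv (pninv := pninv) hLie hpair hpncomm hpninv hT.1 hW hY
  rw [Rmfun, prh_of_n hpair hTW, LinearMap.map_zero₂, pr_of_mem (n_le_m hpair hTW),
    Sfun_n_any hpair hW Y, pr_of_mem hY,
    Sfun_t_any hpair hT (-((2⁻¹ : ℝ) • pr (𝔨 ⊓ 𝔥ᗮ) (br W Y)) + sExp br 𝔨 pn pninv W Y),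
    Sfun_t_any hpair hT Y, pr_of_mem hY,
    Sfun_n_any hpair hW (-(br T Y)), pr_neg, pr_of_mem hTY,
    Sfun_n_any hpair hTW Y, pr_of_mem hY]
  rw [pr_add, pr_neg, pr_smul, prn_of_k (t_le_k (pr_mem (𝔨 ⊓ 𝔥ᗮ) (br W Y))),
    pr_of_mem (sExp_mem hpninv W Y)]
  simp only [smul_zero, neg_zero, zero_add, map_neg, pr_neg, sExp_neg₂, neg_neg, smul_neg]
  rw [heq]
  abel

/-- MAIN3a, formula. -/
lemma Rm_n_t_n (hLie : IsLieQ br) (hpair : IsToralPair br 𝔥 𝔨)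
    (hpncomm : CommAd br 𝔨 pn) (hpninv : InvOn' 𝔨ᗮ pn pninv)
    {X U Y : G} (hX : X ∈ 𝔨ᗮ) (hU : U ∈ 𝔨 ⊓ 𝔥ᗮ) (hY : Y ∈ 𝔨ᗮ) :
    Rmfun br 𝔥 𝔨 0 pn pninv X U Y =
      (2⁻¹ : ℝ) • pr (𝔨 ⊓ 𝔥ᗮ) (br (br X U) Y) -
        (2⁻¹ : ℝ) • pr (𝔨 ⊓ 𝔥ᗮ) (br X (br U Y)) := by
  have hUX : br U X ∈ 𝔨ᗮ := br_t_n hLie hpair hU hX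
  have hXU : br X U ∈ 𝔨ᗮ := by
    rw [br_skew hLie X U]; exact Submodule.neg_mem _ hUX
  have hUY : br U Y ∈ 𝔨ᗮ := br_t_n hLie hpair hU hY
  have heq := sExp_equiv (pninv := pninv) hLie hpair hpncomm hpninv hU.1 hX hY
  have hskew : sExp br 𝔨 pn pninv (br U X) Y = - sExp br 𝔨 pn pninv (br X U) Y := by
    rw [br_skew hLie U X, sExp_neg₁]
  rw [Rmfun, prh_of_n hpair hXU, LinearMap.map_zero₂, pr_of_mem (n_le_m hpair hXU),
    Sfun_t_any hpair hU Y, pr_of_mem hY,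
    Sfun_n_any hpair hX (-(br U Y)), pr_neg, pr_of_mem hUY,
    Sfun_n_any hpair hX Y, pr_of_mem hY,
    Sfun_t_any hpair hU
      (-((2⁻¹ : ℝ) • pr (𝔨 ⊓ 𝔥ᗮ) (br X Y)) + sExp br 𝔨 pn pninv X Y),
    Sfun_n_any hpair hXU Y, pr_of_mem hY]
  rw [pr_add, pr_neg, pr_smul, prn_of_k (t_le_k (pr_mem (𝔨 ⊓ 𝔥ᗮ) (br X Y))),
    pr_of_mem (sExp_mem hpninv X Y)]
  simp only [smul_zero, neg_zero, zero_add, map_neg, pr_neg, sExp_neg₂, neg_neg, smul_neg]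
  rw [heq, hskew]
  abel

end SE

section Cases

variable {𝔥 𝔨 : Submodule ℝ G} {pn pninv : G →L[ℝ] G}

lemma inner_n_prt {v : G} (hv : v ∈ 𝔨ᗮ) (w : G) : ⟪v, pr (𝔨 ⊓ 𝔥ᗮ) w⟫ = 0 :=
  inner_of_orth' hv (t_le_k (pr_mem (𝔨 ⊓ 𝔥ᗮ) w))

/-- MAIN3a, inner product form. -/
lemma inner_Rm_n_t (hLie : IsLieQ br) (hpair : IsToralPair br 𝔥 𝔨)
    (hpncomm : CommAd br 𝔨 pn) (hpninv : InvOn' 𝔨ᗮ pn pninv)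
    {X U Y : G} (hX : X ∈ 𝔨ᗮ) (hU : U ∈ 𝔨 ⊓ 𝔥ᗮ) (hY : Y ∈ 𝔨ᗮ) :
    ⟪U, Rmfun br 𝔥 𝔨 0 pn pninv X U Y⟫ = 0 := by
  rw [Rm_n_t_n hLie hpair hpncomm hpninv hX hU hY, inner_sub_right,
    real_inner_smul_right, real_inner_smul_right,
    inner_pr_right _ _ _ hU, inner_pr_right _ _ _ hU]
  have e1 : ⟪br X U, br U Y⟫ = -⟪U, br X (br U Y)⟫ := adinv hLie X U (br U Y)
  have e2 : ⟪br U (br X U), Y⟫ = -⟪br X U, br U Y⟫ := adinv hLie U (br X U) Y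
  have e3 : ⟪br (br X U) U, Y⟫ = -⟪U, br (br X U) Y⟫ := adinv hLie (br X U) U Y
  have e4 : ⟪br (br X U) U, Y⟫ = -⟪br U (br X U), Y⟫ := by
    rw [br_skew hLie (br X U) U, inner_neg_left]
  linarith

/-- MAIN3b : difference between total- and base-curvature is `𝔱`-valued. -/
lemma Rm_n_n_diff (hLie : IsLieQ br) (hpair : IsToralPair br 𝔥 𝔨)
    (hpn : SymOn 𝔨ᗮ pn) (hpncomm : CommAd br 𝔨 pn) (hpninv : InvOn' 𝔨ᗮ pn pninv)
    {SN : G → G → G} (hSN : IsSN br 𝔨 pn pninv SN)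
    {X W Y : G} (hX : X ∈ 𝔨ᗮ) (hW : W ∈ 𝔨ᗮ) (hY : Y ∈ 𝔨ᗮ) :
    Rmfun br 𝔥 𝔨 0 pn pninv X W Y =
      RmNfun br 𝔨 SN X W Y
        + ((2⁻¹ : ℝ) • pr (𝔨 ⊓ 𝔥ᗮ) (br X (sExp br 𝔨 pn pninv W Y))
          - (2⁻¹ : ℝ) • pr (𝔨 ⊓ 𝔥ᗮ) (br W (sExp br 𝔨 pn pninv X Y))
          + (2⁻¹ : ℝ) • pr (𝔨 ⊓ 𝔥ᗮ) (br (pr 𝔨ᗮ (br X W)) Y)) := by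
  rw [RmNfun, SN_eq hLie hpn hpninv hSN hW hY,
    SN_eq hLie hpn hpninv hSN hX (sExp_mem hpninv W Y),
    SN_eq hLie hpn hpninv hSN hX hY,
    SN_eq hLie hpn hpninv hSN hW (sExp_mem hpninv X Y),
    SN_eq hLie hpn hpninv hSN (pr_mem 𝔨ᗮ (br X W)) hY]
  rw [Rmfun, pr_m_eq hpair (br X W), Sfun_add₁ hpair,
    Sfun_t_any hpair (pr_mem (𝔨 ⊓ 𝔥ᗮ) (br X W)),
    Sfun_n_any hpair (pr_mem 𝔨ᗮ (br X W)),
    Sfun_n_any hpair hW Y, Sfun_n_any hpair hX Y,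
    Sfun_n_any hpair hX
      (-((2⁻¹ : ℝ) • pr (𝔨 ⊓ 𝔥ᗮ) (br W (pr 𝔨ᗮ Y))) + sExp br 𝔨 pn pninv W (pr 𝔨ᗮ Y)),
    Sfun_n_any hpair hW
      (-((2⁻¹ : ℝ) • pr (𝔨 ⊓ 𝔥ᗮ) (br X (pr 𝔨ᗮ Y))) + sExp br 𝔨 pn pninv X (pr 𝔨ᗮ Y)),
    pr_k_eq hpair (br X W)]
  simp only [pr_of_mem hY, pr_add, pr_neg, pr_smul,
    prn_of_k (t_le_k (pr_mem (𝔨 ⊓ 𝔥ᗮ) (br W Y))),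
    prn_of_k (t_le_k (pr_mem (𝔨 ⊓ 𝔥ᗮ) (br X Y))),
    pr_of_mem (sExp_mem hpninv W Y), pr_of_mem (sExp_mem hpninv X Y),
    map_add, LinearMap.add_apply, smul_zero, neg_zero, zero_add, add_zero,
    map_neg, neg_neg, smul_neg]
  abel

end Cases

section Traces

lemma sum_pr_eq (𝔪 W : Submodule ℝ G) (hW : W ≤ 𝔪) (A : G →ₗ[ℝ] G) :
    (∑ i, ⟪pr W ((stdOrthonormalBasis ℝ 𝔪) i : G), A ((stdOrthonormalBasis ℝ 𝔪) i : G)⟫) =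
      ∑ j, ⟪((stdOrthonormalBasis ℝ W) j : G), A ((stdOrthonormalBasis ℝ W) j : G)⟫ := by
  set e := stdOrthonormalBasis ℝ 𝔪 with he
  set b := stdOrthonormalBasis ℝ W with hb
  have hprW : ∀ x : G, pr W x = ∑ j, ⟪(b j : G), x⟫ • (b j : G) := by
    intro x
    have h := b.orthogonalProjectionOnto_apply_eq_sum x
    calc pr W x = ((W.orthogonalProjectionOnto x : W) : G) := rfl
      _ = _ := by rw [h]; push_cast; rfl
  have hprM : ∀ x : G, pr 𝔪 x = ∑ i, ⟪(e i : G), x⟫ • (e i : G) := by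
    intro x
    have h := e.orthogonalProjectionOnto_apply_eq_sum x
    calc pr 𝔪 x = ((𝔪.orthogonalProjectionOnto x : 𝔪) : G) := rfl
      _ = _ := by rw [h]; push_cast; rfl
  calc (∑ i, ⟪pr W (e i : G), A (e i : G)⟫)
      = ∑ i, ∑ j, ⟪(b j : G), (e i : G)⟫ * ⟪(b j : G), A (e i : G)⟫ := by
        refine Finset.sum_congr rfl fun i _ => ?_
        rw [hprW, sum_inner]
        exact Finset.sum_congr rfl fun j _ => real_inner_smul_left _ _ _
    _ = ∑ j, ∑ i, ⟪(b j : G), (e i : G)⟫ * ⟪(b j : G), A (e i : G)⟫ := Finset.sum_comm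
    _ = ∑ j, ⟪(b j : G), A (b j : G)⟫ := by
        refine Finset.sum_congr rfl fun j _ => ?_
        have h1 : ∀ i, ⟪(b j : G), (e i : G)⟫ * ⟪(b j : G), A (e i : G)⟫
            = ⟪(b j : G), A (⟪(e i : G), (b j : G)⟫ • (e i : G))⟫ := by
          intro i
          rw [map_smul, real_inner_smul_right, real_inner_comm ((b j : G)) ((e i : G))]
        calc ∑ i, ⟪(b j : G), (e i : G)⟫ * ⟪(b j : G), A (e i : G)⟫
            = ∑ i, ⟪(b j : G), A (⟪(e i : G), (b j : G)⟫ • (e i : G))⟫ :=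
              Finset.sum_congr rfl fun i _ => h1 i
          _ = ⟪(b j : G), A (∑ i, ⟪(e i : G), (b j : G)⟫ • (e i : G))⟫ := by
              rw [map_sum, inner_sum]
          _ = ⟪(b j : G), A (pr 𝔪 (b j : G))⟫ := by rw [← hprM]
          _ = ⟪(b j : G), A (b j : G)⟫ := by rw [pr_of_mem (hW (b j).2)]

lemma sum_split {𝔥 𝔨 : Submodule ℝ G} (hpair : IsToralPair br 𝔥 𝔨) (A : G →ₗ[ℝ] G) :
    (∑ i, ⟪((stdOrthonormalBasis ℝ 𝔥ᗮ) i : G), A ((stdOrthonormalBasis ℝ 𝔥ᗮ) i : G)⟫) =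
      (∑ j, ⟪((stdOrthonormalBasis ℝ ↥(𝔨 ⊓ 𝔥ᗮ)) j : G),
          A ((stdOrthonormalBasis ℝ ↥(𝔨 ⊓ 𝔥ᗮ)) j : G)⟫) +
        ∑ k, ⟪((stdOrthonormalBasis ℝ 𝔨ᗮ) k : G), A ((stdOrthonormalBasis ℝ 𝔨ᗮ) k : G)⟫ := by
  set e := stdOrthonormalBasis ℝ 𝔥ᗮ with he
  have h1 : ∀ i, (e i : G) = pr (𝔨 ⊓ 𝔥ᗮ) (e i : G) + pr 𝔨ᗮ (e i : G) := by
    intro i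
    rw [← pr_m_eq hpair, pr_of_mem (e i).2]
  calc (∑ i, ⟪(e i : G), A (e i : G)⟫)
      = ∑ i, (⟪pr (𝔨 ⊓ 𝔥ᗮ) (e i : G), A (e i : G)⟫ + ⟪pr 𝔨ᗮ (e i : G), A (e i : G)⟫) := by
        refine Finset.sum_congr rfl fun i _ => ?_
        nth_rewrite 1 [h1 i]
        rw [inner_add_left]
    _ = (∑ i, ⟪pr (𝔨 ⊓ 𝔥ᗮ) (e i : G), A (e i : G)⟫) +
          ∑ i, ⟪pr 𝔨ᗮ (e i : G), A (e i : G)⟫ := Finset.sum_add_distrib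
    _ = _ := by
        rw [sum_pr_eq 𝔥ᗮ (𝔨 ⊓ 𝔥ᗮ) t_le_m A, sum_pr_eq 𝔥ᗮ 𝔨ᗮ (n_le_m hpair) A]

end Traces


section Assembly

variable {𝔥 𝔨 : Submodule ℝ G} {pn pninv : G →L[ℝ] G}

lemma projL_mem (W : Submodule ℝ G) (v : G) : projL W v ∈ W := by
  simp only [projL, ContinuousLinearMap.coe_comp', Function.comp_apply,
    Submodule.coe_subtypeL', Submodule.coe_subtype]
  exact (W.orthogonalProjectionOnto v).2

/-- Ricci pairing with `V₂ ∈ 𝔱` vanishes. -/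
lemma ric_val_t (hLie : IsLieQ br) (hpair : IsToralPair br 𝔥 𝔨)
    {T' : G} (hT' : T' ∈ 𝔨 ⊓ 𝔥ᗮ) (V₁ : G) :
    RicBilin br 𝔥 𝔨 0 pn pninv V₁ T' = 0 := by
  rw [RicBilin]
  refine Finset.sum_eq_zero fun i _ => ?_
  rw [Rm_val_t hLie hpair hT', inner_zero_right]

lemma ric_t_n (hLie : IsLieQ br) (hpair : IsToralPair br 𝔥 𝔨)
    (hpncomm : CommAd br 𝔨 pn) (hpninv : InvOn' 𝔨ᗮ pn pninv)
    {T Y : G} (hT : T ∈ 𝔨 ⊓ 𝔥ᗮ) (hY : Y ∈ 𝔨ᗮ) :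
    RicBilin br 𝔥 𝔨 0 pn pninv T Y = 0 := by
  have hA := sum_split hpair
    { toFun := fun Z => Rmfun br 𝔥 𝔨 0 pn pninv T Z Y
      map_add' := fun a b => Rmfun_addZ hpair T Y a b
      map_smul' := fun c a => by simpa using Rmfun_smulZ hpair T Y c a }
  simp only [LinearMap.coe_mk, AddHom.coe_mk] at hA
  rw [RicBilin, hA]
  have z1 : (∑ j, ⟪((stdOrthonormalBasis ℝ ↥(𝔨 ⊓ 𝔥ᗮ)) j : G),
      Rmfun br 𝔥 𝔨 0 pn pninv T ((stdOrthonormalBasis ℝ ↥(𝔨 ⊓ 𝔥ᗮ)) j : G) Y⟫) = 0 := by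
    refine Finset.sum_eq_zero fun j _ => ?_
    rw [Rm_t_t_n hLie hpair hT (SetLike.coe_mem _) hY, inner_zero_right]
  have z2 : (∑ k, ⟪((stdOrthonormalBasis ℝ 𝔨ᗮ) k : G),
      Rmfun br 𝔥 𝔨 0 pn pninv T ((stdOrthonormalBasis ℝ 𝔨ᗮ) k : G) Y⟫) = 0 := by
    refine Finset.sum_eq_zero fun k _ => ?_
    rw [Rm_t_n_n hLie hpair hpncomm hpninv hT (SetLike.coe_mem _) hY, inner_add_right,
      real_inner_smul_right, real_inner_smul_right,
      inner_n_prt (SetLike.coe_mem _), inner_n_prt (SetLike.coe_mem _)]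
    ring
  rw [z1, z2, add_zero]

lemma ric_n_n (hLie : IsLieQ br) (hpair : IsToralPair br 𝔥 𝔨)
    (hpn : SymOn 𝔨ᗮ pn) (hpncomm : CommAd br 𝔨 pn) (hpninv : InvOn' 𝔨ᗮ pn pninv)
    {SN : G → G → G} (hSN : IsSN br 𝔨 pn pninv SN)
    {X Y : G} (hX : X ∈ 𝔨ᗮ) (hY : Y ∈ 𝔨ᗮ) :
    RicBilin br 𝔥 𝔨 0 pn pninv X Y =
      ∑ k, ⟪((stdOrthonormalBasis ℝ 𝔨ᗮ) k : G),
        RmNfun br 𝔨 SN X ((stdOrthonormalBasis ℝ 𝔨ᗮ) k : G) Y⟫ := by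
  have hA := sum_split hpair
    { toFun := fun Z => Rmfun br 𝔥 𝔨 0 pn pninv X Z Y
      map_add' := fun a b => Rmfun_addZ hpair X Y a b
      map_smul' := fun c a => by simpa using Rmfun_smulZ hpair X Y c a }
  simp only [LinearMap.coe_mk, AddHom.coe_mk] at hA
  rw [RicBilin, hA]
  have z1 : (∑ j, ⟪((stdOrthonormalBasis ℝ ↥(𝔨 ⊓ 𝔥ᗮ)) j : G),
      Rmfun br 𝔥 𝔨 0 pn pninv X ((stdOrthonormalBasis ℝ ↥(𝔨 ⊓ 𝔥ᗮ)) j : G) Y⟫) = 0 :=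
    Finset.sum_eq_zero fun j _ =>
      inner_Rm_n_t hLie hpair hpncomm hpninv hX (SetLike.coe_mem _) hY
  rw [z1, zero_add]
  refine Finset.sum_congr rfl fun k _ => ?_
  rw [Rm_n_n_diff hLie hpair hpn hpncomm hpninv hSN hX (SetLike.coe_mem _) hY,
    inner_add_right]
  have hz : ⟪((stdOrthonormalBasis ℝ 𝔨ᗮ) k : G),
      (2⁻¹ : ℝ) • pr (𝔨 ⊓ 𝔥ᗮ) (br X (sExp br 𝔨 pn pninv ((stdOrthonormalBasis ℝ 𝔨ᗮ) k : G) Y))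
        - (2⁻¹ : ℝ) • pr (𝔨 ⊓ 𝔥ᗮ) (br ((stdOrthonormalBasis ℝ 𝔨ᗮ) k : G) (sExp br 𝔨 pn pninv X Y))
        + (2⁻¹ : ℝ) • pr (𝔨 ⊓ 𝔥ᗮ)
            (br (pr 𝔨ᗮ (br X ((stdOrthonormalBasis ℝ 𝔨ᗮ) k : G))) Y)⟫ = 0 := by
    rw [inner_add_right, inner_sub_right, real_inner_smul_right, real_inner_smul_right,
      real_inner_smul_right, inner_n_prt (SetLike.coe_mem _), inner_n_prt (SetLike.coe_mem _),
      inner_n_prt (SetLike.coe_mem _)]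
    ring
  rw [hz, add_zero]

end Assembly

end Aux


/-- assuming no nonzero `X ∈ 𝔫` commutes with all of `𝔨`, the extended Ricci
endomorphism of the generalized submersion metric `P = 0 ⊕ P_𝔫` satisfies `Ric(P).T = 0`
for every `T ∈ 𝔱 = 𝔨 ⊓ 𝔥ᗮ` and `Ric(P).X = Ric_N(P_𝔫).X` for every `X ∈ 𝔫 = 𝔨ᗮ`;
that is, `Ric(0 ⊕ P_𝔫) = 0 ⊕ Ric_N(P_𝔫)`. -/
theorem extRic_collapsed_splits
    (hLie : IsLieQ br) (𝔥 𝔨 : Submodule ℝ G) (hpair : IsToralPair br 𝔥 𝔨)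
    (hmax : NoTrivial br 𝔨)
    (pn pninv : G →L[ℝ] G)
    (hpn : SymOn 𝔨ᗮ pn) (hpnpos : PosDefOn 𝔨ᗮ pn) (hpncomm : CommAd br 𝔨 pn)
    (hpninv : InvOn' 𝔨ᗮ pn pninv)
    (SN : G → G → G) (hSN : IsSN br 𝔨 pn pninv SN)
    (RicN : G →L[ℝ] G) (hRicN : IsBaseRic br 𝔨 SN RicN)
    (Ric : G →L[ℝ] G) (hRic : IsExtRic br 𝔥 𝔨 0 pn pninv Ric) :
    (∀ T ∈ 𝔨 ⊓ 𝔥ᗮ, Ric T = 0) ∧ (∀ X ∈ 𝔨ᗮ, Ric X = RicN X) := by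
  have hRicMem : ∀ v : G, Ric v ∈ 𝔥ᗮ := by
    intro v
    have h : Ric v = projL 𝔥ᗮ ((Ric.comp (projL 𝔥ᗮ)) v) := by
      conv_lhs => rw [hRic.1]
      rfl
    rw [h]
    exact projL_mem _ _
  have hRicNMem : ∀ v : G, RicN v ∈ 𝔨ᗮ := by
    intro v
    have h : RicN v = projL 𝔨ᗮ ((RicN.comp (projL 𝔨ᗮ)) v) := by
      conv_lhs => rw [hRicN.1]
      rfl
    rw [h]
    exact projL_mem _ _
  constructor
  · intro T hT
    have hTm : T ∈ 𝔥ᗮ := hT.2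
    refine eq_zero_of_orth (hRicMem T) fun w hw => ?_
    rw [hRic.2 T hTm w hw]
    have hdec : w = pr (𝔨 ⊓ 𝔥ᗮ) w + pr 𝔨ᗮ w := by
      rw [← pr_m_eq hpair, pr_of_mem hw]
    have hsplit : RicBilin br 𝔥 𝔨 0 pn pninv T w =
        RicBilin br 𝔥 𝔨 0 pn pninv T (pr (𝔨 ⊓ 𝔥ᗮ) w) +
          RicBilin br 𝔥 𝔨 0 pn pninv T (pr 𝔨ᗮ w) := by
      rw [RicBilin, RicBilin, RicBilin, ← Finset.sum_add_distrib]
      refine Finset.sum_congr rfl fun i _ => ?_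
      rw [← inner_add_right, ← Rmfun_addV₂ hpair, ← hdec]
    rw [hsplit, ric_val_t hLie hpair (pr_mem (𝔨 ⊓ 𝔥ᗮ) w) T,
      ric_t_n hLie hpair hpncomm hpninv hT (pr_mem 𝔨ᗮ w)]
    ring
  · intro X hX
    have hXm : X ∈ 𝔥ᗮ := n_le_m hpair hX
    have key : ∀ w ∈ 𝔥ᗮ, ⟪Ric X - RicN X, w⟫ = 0 := by
      intro w hw
      have hdec : w = pr (𝔨 ⊓ 𝔥ᗮ) w + pr 𝔨ᗮ w := by
        rw [← pr_m_eq hpair, pr_of_mem hw]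
      have hsplit : RicBilin br 𝔥 𝔨 0 pn pninv X w =
          RicBilin br 𝔥 𝔨 0 pn pninv X (pr (𝔨 ⊓ 𝔥ᗮ) w) +
            RicBilin br 𝔥 𝔨 0 pn pninv X (pr 𝔨ᗮ w) := by
        rw [RicBilin, RicBilin, RicBilin, ← Finset.sum_add_distrib]
        refine Finset.sum_congr rfl fun i _ => ?_
        rw [← inner_add_right, ← Rmfun_addV₂ hpair, ← hdec]
      have h1 : ⟪Ric X, w⟫ = ⟪RicN X, pr 𝔨ᗮ w⟫ := by
        rw [hRic.2 X hXm w hw, hsplit, ric_val_t hLie hpair (pr_mem (𝔨 ⊓ 𝔥ᗮ) w) X,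
          ric_n_n hLie hpair hpn hpncomm hpninv hSN hX (pr_mem 𝔨ᗮ w),
          ← hRicN.2 X hX (pr 𝔨ᗮ w) (pr_mem 𝔨ᗮ w)]
        ring
      have h2 : ⟪RicN X, w⟫ = ⟪RicN X, pr 𝔨ᗮ w⟫ := by
        nth_rewrite 1 [hdec]
        rw [inner_add_right, inner_of_orth' (hRicNMem X) (t_le_k (pr_mem (𝔨 ⊓ 𝔥ᗮ) w)),
          zero_add]
      rw [inner_sub_left, h1, h2]
      ring
    have h0 := eq_zero_of_orth
      (Submodule.sub_mem _ (hRicMem X) (n_le_m hpair (hRicNMem X))) key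
    exact sub_eq_zero.mp h0
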